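/- arXiv:0802.3118 — 2 statements merged into one kernel-verified Lean document; each statement's English description precedes it below -/
import Mathlib

section
/- Let n ≥ 1, let U ⊆ ℂⁿ be open and K ⊆ U compact. Then there exists a real constant C > 0, depending only on K and U, such that for every holomorphic function f : U → ℂ and every a ∈ K one has |f(a)|² ≤ C · ∫_U |f(z)|² dz, where the integral is with respect to Lebesgue measure on ℂⁿ ≅ ℝ^{2n} (the inequality being trivial when the integral is infinite). -/
open MeasureTheory Metric Real Set
open scoped ENNReal

section Helpers

/-- Circle sub-mean-value for the norm. -/
lemma circle_mean_norm {a : ℂ} {r ρ : ℝ} (hρ : 0 < ρ) (hρr : ρ < r) {f : ℂ → ℂ}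
    (hf : DifferentiableOn ℂ f (ball a r)) :
    2 * π * ‖f a‖ ≤ ∫ θ in (0:ℝ)..(2*π), ‖f (circleMap a ρ θ)‖ := by
  have hsub : closedBall a ρ ⊆ ball a r := closedBall_subset_ball hρr
  have hform := (hf.mono hsub).circleIntegral_sub_inv_smul (mem_ball_self hρ)
  have h1 : ‖(2 * π * Complex.I) • f a‖ = 2 * π * ‖f a‖ := by
    simp [norm_smul, abs_of_pos Real.pi_pos, pi_pos.le]
  calc 2 * π * ‖f a‖ = ‖∮ z in C(a, ρ), (z - a)⁻¹ • f z‖ := by rw [hform, h1]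
    _ ≤ ∫ θ in (0:ℝ)..(2*π), ‖deriv (circleMap a ρ) θ • ((circleMap a ρ θ - a)⁻¹ • f (circleMap a ρ θ))‖ :=
        intervalIntegral.norm_integral_le_integral_norm Real.two_pi_pos.le
    _ = ∫ θ in (0:ℝ)..(2*π), ‖f (circleMap a ρ θ)‖ := by
        refine intervalIntegral.integral_congr fun θ _ => ?_
        simp [norm_smul, deriv_circleMap, circleMap_sub_center, norm_circleMap_zero,
          abs_of_pos hρ, norm_inv]
        field_simp

lemma circle_mean_sq {a : ℂ} {r ρ : ℝ} (hρ : 0 < ρ) (hρr : ρ < r) {f : ℂ → ℂ}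
    (hf : DifferentiableOn ℂ f (ball a r)) :
    ENNReal.ofReal (‖f a‖ ^ 2) * ENNReal.ofReal (2 * π) ≤
      ∫⁻ θ in Ioo (-π) π, ENNReal.ofReal (‖f (circleMap a ρ θ)‖ ^ 2) := by
  have hmaps : ∀ θ : ℝ, circleMap a ρ θ ∈ ball a r := fun θ => by
    have := circleMap_mem_closedBall a hρ.le θ
    exact closedBall_subset_ball hρr this
  have hgc : Continuous fun θ => ‖f (circleMap a ρ θ)‖ :=
    (hf.continuousOn.comp_continuous (continuous_circleMap a ρ) hmaps).norm
  set g : ℝ → ℝ := fun θ => ‖f (circleMap a ρ θ)‖ with hg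
  have hper : Function.Periodic g (2 * π) := fun θ => by simp [hg, periodic_circleMap a ρ θ]
  -- step 1 : real inequality on [-π, π]
  have h1 : 2 * π * ‖f a‖ ≤ ∫ θ in Ioc (-π) π, g θ := by
    have := circle_mean_norm hρ hρr hf
    have hshift := hper.intervalIntegral_add_eq 0 (-π)
    rw [zero_add] at hshift
    have : 2 * π * ‖f a‖ ≤ ∫ θ in (-π)..(-π + 2 * π), g θ := by rw [← hshift]; exact this
    rwa [intervalIntegral.integral_of_le (by nlinarith [pi_pos]),
      show -π + 2 * π = π by ring] at this
  -- step 2 : to lintegral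
  have hint : IntegrableOn g (Ioc (-π) π) := hgc.integrableOn_Ioc
  have h2 : ENNReal.ofReal (2 * π * ‖f a‖) ≤ ∫⁻ θ in Ioo (-π) π, ENNReal.ofReal (g θ) := by
    calc ENNReal.ofReal (2 * π * ‖f a‖) ≤ ENNReal.ofReal (∫ θ in Ioc (-π) π, g θ) :=
          ENNReal.ofReal_le_ofReal h1
      _ = ∫⁻ θ in Ioc (-π) π, ENNReal.ofReal (g θ) :=
          ofReal_integral_eq_lintegral_ofReal hint
            (Filter.Eventually.of_forall fun θ => norm_nonneg _)
      _ = ∫⁻ θ in Ioo (-π) π, ENNReal.ofReal (g θ) :=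
          (setLIntegral_congr Ioo_ae_eq_Ioc).symm
  -- step 3 : Cauchy-Schwarz
  set A : ℝ≥0∞ := ∫⁻ θ in Ioo (-π) π, ENNReal.ofReal (‖f (circleMap a ρ θ)‖ ^ 2) with hA
  set B : ℝ≥0∞ := ENNReal.ofReal (2 * π) with hB
  have h3 : (∫⁻ θ in Ioo (-π) π, ENNReal.ofReal (g θ)) ≤ A ^ (1/2 : ℝ) * B ^ (1/2 : ℝ) := by
    have hCS := ENNReal.lintegral_mul_le_Lp_mul_Lq (volume.restrict (Ioo (-π) π))
      (by constructor <;> norm_num : Real.HolderConjugate 2 2)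
      (f := fun θ => ENNReal.ofReal (g θ)) (g := fun _ => 1)
      (ENNReal.measurable_ofReal.comp hgc.measurable).aemeasurable aemeasurable_const
    simp only [Pi.mul_apply, mul_one, ENNReal.one_rpow] at hCS
    calc (∫⁻ θ in Ioo (-π) π, ENNReal.ofReal (g θ))
        ≤ (∫⁻ θ in Ioo (-π) π, ENNReal.ofReal (g θ) ^ (2:ℝ)) ^ (1/2:ℝ) *
            (∫⁻ _ in Ioo (-π) π, (1:ℝ≥0∞)) ^ (1/2:ℝ) := hCS
      _ = A ^ (1/2 : ℝ) * B ^ (1/2 : ℝ) := by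
          congr 1
          · congr 1
            refine lintegral_congr fun θ => ?_
            rw [ENNReal.ofReal_rpow_of_nonneg (norm_nonneg _) (by norm_num : (0:ℝ) ≤ 2)]
            congr 1
            rw [show (2:ℝ) = ((2:ℕ):ℝ) by norm_num, Real.rpow_natCast]
          · rw [lintegral_one, Measure.restrict_apply_univ, Real.volume_Ioo, hB]
            congr 1
            ring
  -- combine
  have h4 : ENNReal.ofReal (2 * π * ‖f a‖) ≤ A ^ (1/2:ℝ) * B ^ (1/2:ℝ) := h2.trans h3
  have h5 : ENNReal.ofReal (2 * π * ‖f a‖) ^ (2:ℝ) ≤ A * B := by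
    calc ENNReal.ofReal (2 * π * ‖f a‖) ^ (2:ℝ) ≤ (A ^ (1/2:ℝ) * B ^ (1/2:ℝ)) ^ (2:ℝ) :=
          ENNReal.rpow_le_rpow h4 (by norm_num)
      _ = A * B := by
          rw [ENNReal.mul_rpow_of_nonneg _ _ (by norm_num : (0:ℝ) ≤ 2),
            ← ENNReal.rpow_mul, ← ENNReal.rpow_mul]
          norm_num
  have hB0 : B ≠ 0 := by simp [hB, pi_pos]
  have hBt : B ≠ ⊤ := ENNReal.ofReal_ne_top
  rw [← ENNReal.mul_le_mul_iff_left hB0 hBt]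
  calc ENNReal.ofReal (‖f a‖ ^ 2) * B * B = ENNReal.ofReal (2 * π * ‖f a‖) ^ (2:ℝ) := by
        rw [ENNReal.ofReal_mul (by positivity : (0:ℝ) ≤ 2*π),
          show (2:ℝ) = ((2:ℕ):ℝ) by norm_num, ENNReal.rpow_natCast, mul_pow,
          ENNReal.ofReal_pow (norm_nonneg _), hB]
        ring
    _ ≤ A * B := h5

open scoped Topology

lemma disc_mean_sq {a : ℂ} {r : ℝ} (hr : 0 < r) {f : ℂ → ℂ}
    (hf : DifferentiableOn ℂ f (ball a r)) :
    ENNReal.ofReal (‖f a‖ ^ 2) * ENNReal.ofReal (π * r ^ 2 / 2) ≤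
      ∫⁻ z in ball a r, ENNReal.ofReal (‖f z‖ ^ 2) := by
  set h : ℂ → ℝ≥0∞ := fun z => ENNReal.ofReal (‖f z‖ ^ 2) with hh
  set s : Set (ℝ × ℝ) := Ioo (r/2) r ×ˢ Ioo (-π) π with hs
  have hs_meas : MeasurableSet s := (isOpen_Ioo.prod isOpen_Ioo).measurableSet
  set Φ : ℝ × ℝ → ℝ × ℝ := fun p => (a.re, a.im) + polarCoord.symm p with hΦ
  set B : ℝ × ℝ → ℝ × ℝ →L[ℝ] ℝ × ℝ := fun p =>
    LinearMap.toContinuousLinearMap (Matrix.toLin (Module.Basis.finTwoProd ℝ) (Module.Basis.finTwoProd ℝ)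
      !![Real.cos p.2, -p.1 * Real.sin p.2; Real.sin p.2, p.1 * Real.cos p.2]) with hBdef
  have hB_det : ∀ p, (B p).det = p.1 := by
    intro p
    conv_rhs => rw [← one_mul p.1, ← cos_sq_add_sin_sq p.2]
    simp only [hBdef, neg_mul, LinearMap.det_toContinuousLinearMap, LinearMap.det_toLin,
      Matrix.det_fin_two_of, sub_neg_eq_add]
    ring
  have hder : ∀ p ∈ s, HasFDerivWithinAt Φ (B p) s p := fun p _ =>
    (((hasFDerivAt_polarCoord_symm p).const_add (a.re, a.im))).hasFDerivWithinAt
  have hsub_target : s ⊆ polarCoord.target := by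
    rintro ⟨ρ, θ⟩ ⟨h1, h2⟩
    exact ⟨lt_trans (by linarith : (0:ℝ) < r/2) h1.1, h2⟩
  have hinj : InjOn Φ s := by
    intro p hp q hq hpq
    exact polarCoord.symm.injOn (hsub_target hp) (hsub_target hq)
      (by simpa [hΦ, add_right_inj] using hpq)
  -- key pointwise identity
  have hkey : ∀ p : ℝ × ℝ, Complex.measurableEquivRealProd.symm (Φ p) = circleMap a p.1 p.2 := by
    intro p
    simp [Complex.measurableEquivRealProd, circleMap, Complex.ext_iff, Complex.exp_mul_I, hΦ,
      Complex.cos_ofReal_re, Complex.sin_ofReal_re]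
    try constructor <;> ring
  -- continuity and measurability
  have hφc : Continuous fun p : ℝ × ℝ => circleMap a p.1 p.2 := by unfold circleMap; fun_prop
  have hmapsTo : ∀ p ∈ s, circleMap a p.1 p.2 ∈ ball a r := by
    rintro ⟨ρ, θ⟩ ⟨h1, _⟩
    rw [mem_ball]
    have : dist (circleMap a ρ θ) a = |ρ| := by simp [dist_eq, circleMap, Complex.norm_exp]
    rw [this, abs_of_pos (by linarith [h1.1] : (0:ℝ) < ρ)]
    exact h1.2
  have hhc : ContinuousOn h (ball a r) :=
    ENNReal.continuous_ofReal.comp_continuousOn (hf.continuousOn.norm.pow 2)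
  set F : ℝ × ℝ → ℝ≥0∞ := fun p => h (circleMap a p.1 p.2) with hF
  have hFcont : ContinuousOn F s := hhc.comp hφc.continuousOn hmapsTo
  set μ1 := volume.restrict (Ioo (r/2) r) with hμ1
  set μ2 := volume.restrict (Ioo (-π) π) with hμ2
  have hprod_eq : μ1.prod μ2 = volume.restrict s := by
    rw [hμ1, hμ2, Measure.prod_restrict, hs, ← Measure.volume_eq_prod]
  have hFmeas : AEMeasurable F (μ1.prod μ2) := by
    rw [hprod_eq]; exact hFcont.aemeasurable hs_meas
  -- Tonelli + circle estimate
  have tonelli : ∫⁻ p in s, F p ∂volume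
      = ∫⁻ ρ in Ioo (r/2) r, ∫⁻ θ in Ioo (-π) π, F (ρ, θ) ∂volume ∂volume := by
    rw [← hprod_eq, lintegral_prod _ hFmeas]
  have inner_bound : ∀ ρ ∈ Ioo (r/2) r,
      ENNReal.ofReal (‖f a‖ ^ 2) * ENNReal.ofReal (2 * π)
        ≤ ∫⁻ θ in Ioo (-π) π, F (ρ, θ) ∂volume := by
    intro ρ hρ
    exact circle_mean_sq (by linarith [hρ.1] : (0:ℝ) < ρ) hρ.2 hf
  have step1 : ENNReal.ofReal (r - r/2) * (ENNReal.ofReal (‖f a‖ ^ 2) * ENNReal.ofReal (2 * π))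
      ≤ ∫⁻ p in s, F p ∂volume := by
    rw [tonelli]
    calc ENNReal.ofReal (r - r/2) * (ENNReal.ofReal (‖f a‖ ^ 2) * ENNReal.ofReal (2 * π))
        = ∫⁻ _ in Ioo (r/2) r, ENNReal.ofReal (‖f a‖ ^ 2) * ENNReal.ofReal (2 * π) ∂volume := by
          rw [lintegral_const, Measure.restrict_apply_univ, Real.volume_Ioo, mul_comm]
      _ ≤ _ := setLIntegral_mono' measurableSet_Ioo inner_bound
  -- change of variables
  have hcv : ∫⁻ q in Φ '' s, h (Complex.measurableEquivRealProd.symm q) ∂volume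
      = ∫⁻ p in s, ENNReal.ofReal |(B p).det| * h (Complex.measurableEquivRealProd.symm (Φ p)) ∂volume :=
    lintegral_image_eq_lintegral_abs_det_fderiv_mul volume hs_meas hder hinj _
  have step2 : ENNReal.ofReal (r/2) * ∫⁻ p in s, F p ∂volume
      ≤ ∫⁻ q in Φ '' s, h (Complex.measurableEquivRealProd.symm q) ∂volume := by
    rw [hcv, ← lintegral_const_mul' _ _ ENNReal.ofReal_ne_top]
    refine setLIntegral_mono' hs_meas fun p hp => ?_
    rw [hB_det, hkey]
    refine mul_le_mul_left ?_ _
    refine ENNReal.ofReal_le_ofReal ?_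
    rcases hp with ⟨h1, _⟩
    rw [abs_of_pos (by linarith [h1.1] : (0:ℝ) < p.1)]
    linarith [h1.1]
  -- transfer to ℂ and monotonicity
  have step3 : ∫⁻ q in Φ '' s, h (Complex.measurableEquivRealProd.symm q) ∂volume
      = ∫⁻ z in Complex.measurableEquivRealProd.symm '' (Φ '' s), h z ∂volume :=
    (Complex.volume_preserving_equiv_real_prod.symm).setLIntegral_comp_emb
      Complex.measurableEquivRealProd.symm.measurableEmbedding _ _
  have himg : Complex.measurableEquivRealProd.symm '' (Φ '' s) ⊆ ball a r := by
    rintro z ⟨q, ⟨p, hp, rfl⟩, rfl⟩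
    rw [hkey]
    exact hmapsTo p hp
  have step4 : ∫⁻ z in Complex.measurableEquivRealProd.symm '' (Φ '' s), h z ∂volume
      ≤ ∫⁻ z in ball a r, h z ∂volume := lintegral_mono_set himg
  -- assemble
  have harith : ENNReal.ofReal (‖f a‖ ^ 2) * ENNReal.ofReal (π * r ^ 2 / 2)
      = ENNReal.ofReal (r/2) *
        (ENNReal.ofReal (r - r/2) * (ENNReal.ofReal (‖f a‖ ^ 2) * ENNReal.ofReal (2 * π))) := by
    rw [← ENNReal.ofReal_mul (by positivity : (0:ℝ) ≤ ‖f a‖ ^ 2),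
      ← ENNReal.ofReal_mul (by positivity : (0:ℝ) ≤ ‖f a‖ ^ 2),
      ← ENNReal.ofReal_mul (by linarith : (0:ℝ) ≤ r - r/2),
      ← ENNReal.ofReal_mul (by positivity : (0:ℝ) ≤ r/2)]
    congr 1
    ring
  calc ENNReal.ofReal (‖f a‖ ^ 2) * ENNReal.ofReal (π * r ^ 2 / 2)
      = ENNReal.ofReal (r/2) *
        (ENNReal.ofReal (r - r/2) * (ENNReal.ofReal (‖f a‖ ^ 2) * ENNReal.ofReal (2 * π))) := harith
    _ ≤ ENNReal.ofReal (r/2) * ∫⁻ p in s, F p ∂volume := mul_le_mul_right step1 _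
    _ ≤ ∫⁻ q in Φ '' s, h (Complex.measurableEquivRealProd.symm q) ∂volume := step2
    _ = ∫⁻ z in Complex.measurableEquivRealProd.symm '' (Φ '' s), h z ∂volume := step3
    _ ≤ ∫⁻ z in ball a r, h z ∂volume := step4

lemma pi_mean_sq : ∀ (n : ℕ) (a : Fin n → ℂ) (r : ℝ), 0 < r → ∀ f : (Fin n → ℂ) → ℂ,
    DifferentiableOn ℂ f (ball a r) →
    ENNReal.ofReal (‖f a‖ ^ 2) * ENNReal.ofReal (π * r ^ 2 / 2) ^ n ≤
      ∫⁻ z in ball a r, ENNReal.ofReal (‖f z‖ ^ 2) := by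
  intro n
  induction n with
  | zero =>
    intro a r hr f _
    have hball : ball a r = univ := eq_univ_of_forall fun z => by
      simpa [Subsingleton.elim z a] using mem_ball_self hr (x := a)
    have hconst : ∀ z : Fin 0 → ℂ, f z = f a := fun z => by rw [Subsingleton.elim z a]
    rw [hball, setLIntegral_univ]
    have heq : (fun z : Fin 0 → ℂ => ENNReal.ofReal (‖f z‖ ^ 2))
        = fun _ => ENNReal.ofReal (‖f a‖ ^ 2) := funext fun z => by rw [hconst z]
    rw [heq, lintegral_const]
    have : (volume : Measure (Fin 0 → ℂ)) univ = 1 := by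
      rw [MeasureTheory.volume_pi, Measure.pi_univ]
      simp
    rw [this, mul_one, pow_zero, mul_one]
  | succ n ih =>
    intro a r hr f hf
    set c : ℝ≥0∞ := ENNReal.ofReal (π * r ^ 2 / 2) with hc
    set a' : Fin n → ℂ := Fin.tail a with ha'
    set e := MeasurableEquiv.piFinSuccAbove (fun _ : Fin (n+1) => ℂ) 0 with he
    set T : Set (ℂ × (Fin n → ℂ)) := ball (a 0) r ×ˢ ball a' r with hT
    have hT_meas : MeasurableSet T := (isOpen_ball.prod isOpen_ball).measurableSet
    -- e.symm (x, y) = Fin.cons x y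
    have hsymm : ∀ (x : ℂ) (y : Fin n → ℂ), e.symm (x, y) = Fin.cons x y := fun x y => by
      simp [he, MeasurableEquiv.piFinSuccAbove, Fin.insertNthEquiv, Fin.insertNth_zero']
    -- cons maps T into ball a r
    have hcons_mem : ∀ x ∈ ball (a 0) r, ∀ y ∈ ball a' r, Fin.cons x y ∈ ball a r := by
      intro x hx y hy
      rw [mem_ball, dist_pi_lt_iff hr]
      intro i
      refine Fin.cases ?_ (fun j => ?_) i
      · simpa using mem_ball.mp hx
      · simpa [Fin.tail, ha'] using (dist_pi_lt_iff hr).mp (mem_ball.mp hy) j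
    -- differentiability of slices
    have hcons_diff : ∀ y : Fin n → ℂ, Differentiable ℂ (fun x : ℂ => Fin.cons x y :
        ℂ → (Fin (n+1) → ℂ)) := by
      intro y
      rw [differentiable_pi]
      intro i
      refine Fin.cases ?_ (fun j => ?_) i
      · simpa using differentiable_id
      · simpa using differentiable_const (y j)
    have hcons_diff' : ∀ x : ℂ, Differentiable ℂ (fun y : Fin n → ℂ => Fin.cons x y :
        (Fin n → ℂ) → (Fin (n+1) → ℂ)) := by
      intro x
      rw [differentiable_pi]
      intro i
      refine Fin.cases ?_ (fun j => ?_) i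
      · simpa using differentiable_const x
      · simpa using differentiable_apply (𝕜 := ℂ) (F' := fun _ : Fin n => ℂ) j
    -- the slice through the center
    have hφ_diff : DifferentiableOn ℂ (fun x : ℂ => f (Fin.cons x a')) (ball (a 0) r) := by
      refine hf.comp ((hcons_diff a').differentiableOn) fun x hx => ?_
      exact hcons_mem x hx a' (mem_ball_self hr)
    have hφa : f (Fin.cons (a 0) a') = f a := by rw [ha', Fin.cons_self_tail]
    have step_outer : ENNReal.ofReal (‖f a‖ ^ 2) * c ≤
        ∫⁻ x in ball (a 0) r, ENNReal.ofReal (‖f (Fin.cons x a')‖ ^ 2) := by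
      have := disc_mean_sq hr hφ_diff
      rwa [hφa] at this
    -- inner bound via induction hypothesis
    have step_inner : ∀ x ∈ ball (a 0) r,
        c ^ n * ENNReal.ofReal (‖f (Fin.cons x a')‖ ^ 2) ≤
          ∫⁻ y in ball a' r, ENNReal.ofReal (‖f (Fin.cons x y)‖ ^ 2) := by
      intro x hx
      have hdiff : DifferentiableOn ℂ (fun y => f (Fin.cons x y)) (ball a' r) :=
        hf.comp ((hcons_diff' x).differentiableOn) fun y hy => hcons_mem x hx y hy
      have := ih a' r hr _ hdiff
      rwa [mul_comm] at this
    -- continuity / measurability for Tonelli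
    have hhc : ContinuousOn (fun z => ENNReal.ofReal (‖f z‖ ^ 2)) (ball a r) :=
      ENNReal.continuous_ofReal.comp_continuousOn (hf.continuousOn.norm.pow 2)
    have hconsc : Continuous fun w : ℂ × (Fin n → ℂ) => (Fin.cons w.1 w.2 : Fin (n+1) → ℂ) :=
      continuous_pi fun i => Fin.cases continuous_fst
        (fun j => (continuous_apply j).comp continuous_snd) i
    set H : ℂ × (Fin n → ℂ) → ℝ≥0∞ := fun w => ENNReal.ofReal (‖f (Fin.cons w.1 w.2)‖ ^ 2)
      with hH
    have hHcont : ContinuousOn H T :=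
      hhc.comp hconsc.continuousOn fun w hw => hcons_mem w.1 hw.1 w.2 hw.2
    have hprod_eq : (volume.restrict (ball (a 0) r)).prod (volume.restrict (ball a' r))
        = volume.restrict T := by
      rw [Measure.prod_restrict, hT, ← Measure.volume_eq_prod]
    have hHmeas : AEMeasurable H ((volume.restrict (ball (a 0) r)).prod
        (volume.restrict (ball a' r))) := by
      rw [hprod_eq]; exact hHcont.aemeasurable hT_meas
    have tonelli : ∫⁻ w in T, H w ∂volume
        = ∫⁻ x in ball (a 0) r, ∫⁻ y in ball a' r, H (x, y) ∂volume ∂volume := by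
      rw [← hprod_eq, lintegral_prod _ hHmeas]
    -- transfer
    have transfer : ∫⁻ w in T, H w ∂volume = ∫⁻ z in e.symm '' T, ENNReal.ofReal (‖f z‖ ^ 2)
        ∂volume := by
      have hmp : MeasurePreserving e.symm volume volume :=
        (volume_preserving_piFinSuccAbove (fun _ : Fin (n+1) => ℂ) 0).symm
      have := hmp.setLIntegral_comp_emb e.symm.measurableEmbedding
        (fun z => ENNReal.ofReal (‖f z‖ ^ 2)) T
      rw [← this]
      exact setLIntegral_congr_fun hT_meas (fun w _ => by
        rw [hH, hsymm w.1 w.2])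
    have himg : e.symm '' T ⊆ ball a r := by
      rintro z ⟨w, hw, rfl⟩
      rw [hsymm w.1 w.2]
      exact hcons_mem w.1 hw.1 w.2 hw.2
    -- assemble
    calc ENNReal.ofReal (‖f a‖ ^ 2) * c ^ (n + 1)
        = c ^ n * (ENNReal.ofReal (‖f a‖ ^ 2) * c) := by ring
      _ ≤ c ^ n * ∫⁻ x in ball (a 0) r, ENNReal.ofReal (‖f (Fin.cons x a')‖ ^ 2) :=
          mul_le_mul_right step_outer _
      _ = ∫⁻ x in ball (a 0) r, c ^ n * ENNReal.ofReal (‖f (Fin.cons x a')‖ ^ 2) :=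
          (lintegral_const_mul' _ _ (by simp [hc, ENNReal.pow_ne_top])).symm
      _ ≤ ∫⁻ x in ball (a 0) r, ∫⁻ y in ball a' r, H (x, y) ∂volume ∂volume :=
          setLIntegral_mono' measurableSet_ball fun x hx => step_inner x hx
      _ = ∫⁻ w in T, H w ∂volume := tonelli.symm
      _ = ∫⁻ z in e.symm '' T, ENNReal.ofReal (‖f z‖ ^ 2) ∂volume := transfer
      _ ≤ ∫⁻ z in ball a r, ENNReal.ofReal (‖f z‖ ^ 2) ∂volume := lintegral_mono_set himg

end Helpers

/-- **Mean-value estimate for holomorphic functions.** Let `U ⊆ ℂⁿ` be open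
and `K ⊆ U` compact. Then there is a constant `C > 0`, depending only on `K`
and `U`, such that for every holomorphic function `f : U → ℂ` and every
`a ∈ K`, `|f(a)|² ≤ C ∫_U |f(z)|² dz` (with respect to Lebesgue measure on
`ℂⁿ`; the inequality is trivial when the integral is infinite). -/
theorem sq_norm_le_const_mul_integral_sq_norm
    (n : ℕ) (hn : 1 ≤ n) (U : Set (Fin n → ℂ)) (hU : IsOpen U)
    (K : Set (Fin n → ℂ)) (hK : IsCompact K) (hKU : K ⊆ U) :
    ∃ C : ℝ, 0 < C ∧ ∀ f : (Fin n → ℂ) → ℂ, DifferentiableOn ℂ f U →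
      ∀ a ∈ K, ENNReal.ofReal (‖f a‖ ^ 2) ≤
        ENNReal.ofReal C * ∫⁻ z in U, ENNReal.ofReal (‖f z‖ ^ 2) ∂volume := by
  obtain ⟨δ, hδ, hδU⟩ := hK.exists_cthickening_subset_open hU hKU
  refine ⟨((π * δ ^ 2 / 2) ^ n)⁻¹, by positivity, ?_⟩
  intro f hf a ha
  have hball : ball a δ ⊆ U :=
    (ball_subset_closedBall.trans (closedBall_subset_cthickening ha δ)).trans hδU
  have key := pi_mean_sq n a δ hδ f (hf.mono hball)
  have hmono : (∫⁻ z in ball a δ, ENNReal.ofReal (‖f z‖ ^ 2) ∂volume)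
      ≤ ∫⁻ z in U, ENNReal.ofReal (‖f z‖ ^ 2) ∂volume := lintegral_mono_set hball
  set c : ℝ≥0∞ := ENNReal.ofReal (π * δ ^ 2 / 2) with hcdef
  have hcn0 : c ^ n ≠ 0 := by
    simp only [hcdef, pow_ne_zero_iff, ne_eq]
    positivity
  have hcnt : c ^ n ≠ ⊤ := by simp [hcdef, ENNReal.pow_ne_top]
  have hC : ENNReal.ofReal (((π * δ ^ 2 / 2) ^ n)⁻¹) = (c ^ n)⁻¹ := by
    rw [ENNReal.ofReal_inv_of_pos (by positivity), ENNReal.ofReal_pow (by positivity)]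
  rw [hC]
  have hXle : ENNReal.ofReal (‖f a‖ ^ 2) ≤
      (∫⁻ z in U, ENNReal.ofReal (‖f z‖ ^ 2) ∂volume) / c ^ n := by
    rw [ENNReal.le_div_iff_mul_le (Or.inl hcn0) (Or.inl hcnt)]
    exact key.trans hmono
  calc ENNReal.ofReal (‖f a‖ ^ 2)
      ≤ (∫⁻ z in U, ENNReal.ofReal (‖f z‖ ^ 2) ∂volume) / c ^ n := hXle
    _ = (c ^ n)⁻¹ * ∫⁻ z in U, ENNReal.ofReal (‖f z‖ ^ 2) ∂volume :=
        ENNReal.div_eq_inv_mul ..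
end

section
/- Let M ⊆ ℂⁿ be open and let Γ be a group of biholomorphic maps A : M → M each of which preserves Lebesgue measure on M. Let a ∈ M be a point whose stabilizer Γ_a := {A ∈ Γ : A(a) = a} is finite, and suppose there is an open neighborhood U ⊆ M of a such that for all A ∈ Γ: if A(U) ∩ U ≠ ∅ then A ∈ Γ_a, and if A ∈ Γ_a then A(U) = U. Then for every holomorphic function f : M → ℂ with ∫_M |f(z)|² dz < ∞, the family (|f(A(a))|²)_{A ∈ Γ} is summable; in particular the Poincaré series Σ_{A ∈ Γ} |f(A(a))|² converges. -/
open MeasureTheory Metric Set Complex intervalIntegral Real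
open scoped ENNReal NNReal

theorem circle_submean (F : ℂ → ℂ) (c : ℂ) (ρ : ℝ) (hρ : 0 < ρ) (V : Set ℂ)
    (hF : DifferentiableOn ℂ F V) (hsub : closedBall c ρ ⊆ V) :
    ‖F c‖ ^ 2 * (2 * π) ≤ ∫ θ in (0:ℝ)..(2*π), ‖F (circleMap c ρ θ)‖ ^ 2 := by
  set g : ℂ → ℂ := fun z => F z * F z with hg
  have hgd : DiffContOnCl ℂ g (ball c ρ) := by
    refine DifferentiableOn.diffContOnCl ?_
    have : closure (ball c ρ) = closedBall c ρ := closure_ball c hρ.ne'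
    rw [this]
    exact ((hF.mono hsub).mul (hF.mono hsub))
  have hc : (∮ z in C(c, ρ), (z - c)⁻¹ • g z) = (2 * π * I : ℂ) • g c :=
    hgd.circleIntegral_sub_inv_smul (mem_ball_self hρ)
  have hint : (∮ z in C(c, ρ), (z - c)⁻¹ • g z)
      = I * ∫ θ in (0:ℝ)..(2*π), g (circleMap c ρ θ) := by
    rw [circleIntegral]
    rw [← intervalIntegral.integral_const_mul]
    refine intervalIntegral.integral_congr fun θ _ => ?_
    simp only [deriv_circleMap, circleMap_sub_center, smul_eq_mul]
    have hne : circleMap 0 ρ θ ≠ 0 := by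
      simpa [circleMap_sub_center] using circleMap_ne_center (c := c) hρ.ne' (θ := θ)
    field_simp
  have heq : I * ((2 * π : ℂ) * g c) = I * ∫ θ in (0:ℝ)..(2*π), g (circleMap c ρ θ) := by
    rw [← hint, hc, smul_eq_mul]; ring
  have hgc : g c = (2 * π : ℂ)⁻¹ * ∫ θ in (0:ℝ)..(2*π), g (circleMap c ρ θ) := by
    have h2 : (2 * π : ℂ) ≠ 0 := by
      simp [Real.pi_ne_zero, Complex.ofReal_ne_zero]
    have := mul_left_cancel₀ I_ne_zero heq
    field_simp [h2]
    linear_combination this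
  have hnorm : ‖g c‖ ≤ (2 * π)⁻¹ * ∫ θ in (0:ℝ)..(2*π), ‖g (circleMap c ρ θ)‖ := by
    rw [hgc, norm_mul]
    gcongr
    · apply le_of_eq
      rw [norm_inv]
      congr 1
      have : (2 * (π:ℂ)) = ((2 * π : ℝ) : ℂ) := by push_cast; ring
      rw [this, Complex.norm_real, Real.norm_of_nonneg Real.two_pi_pos.le]
    · exact intervalIntegral.norm_integral_le_integral_norm Real.two_pi_pos.le
  have hgnorm : ∀ z, ‖g z‖ = ‖F z‖ ^ 2 := fun z => by
    simp [hg, norm_mul, sq]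
  rw [hgnorm] at hnorm
  simp_rw [hgnorm] at hnorm
  rw [← le_div_iff₀ Real.two_pi_pos]
  rwa [inv_mul_eq_div] at hnorm

theorem disc_submean (F : ℂ → ℂ) (c : ℂ) (r : ℝ) (hr : 0 < r) (V : Set ℂ)
    (hF : DifferentiableOn ℂ F V) (hsub : closedBall c r ⊆ V) :
    ENNReal.ofReal (‖F c‖ ^ 2) * volume (ball c r)
      ≤ ∫⁻ z in ball c r, ENNReal.ofReal (‖F z‖ ^ 2) := by
  have hFc : ContinuousOn F (closedBall c r) := (hF.mono hsub).continuousOn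
  set u : ℂ → ℝ := fun z => ‖F z‖ ^ 2 with hu
  have huc : ContinuousOn u (closedBall c r) := (hFc.norm.pow 2)
  -- the parametrization
  set ψ : ℝ × ℝ → ℂ := fun p => c + ↑p.1 * (Real.cos p.2 + Real.sin p.2 * I) with hψ
  have hψc : Continuous ψ := by fun_prop
  have hψ_eq : ∀ p : ℝ × ℝ, c + Complex.polarCoord.symm p = ψ p := by
    intro p; rw [Complex.polarCoord_symm_apply]
  have hψ_dist : ∀ p : ℝ × ℝ, dist (ψ p) c = |p.1| := by
    intro p
    rw [dist_eq_norm]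
    have : ψ p - c = ↑p.1 * Complex.exp (↑p.2 * I) := by
      rw [hψ]; simp [Complex.exp_mul_I]
    rw [this, norm_mul, Complex.norm_real, Real.norm_eq_abs,
      Complex.norm_exp_ofReal_mul_I, mul_one]
  have hψ_circle : ∀ ρ θ : ℝ, ψ (ρ, θ) = circleMap c ρ θ := by
    intro ρ θ
    rw [hψ, circleMap]
    simp [Complex.exp_mul_I]
  -- indicator function for polar change of variables
  set f0 : ℂ → ℝ := (ball (0:ℂ) r).indicator (fun w => u (c + w)) with hf0
  set s : Set (ℝ × ℝ) := Ioo (0:ℝ) r ×ˢ Ioo (-π) π with hs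
  have hpolar := Complex.integral_comp_polarCoord_symm f0
  -- RHS of polar formula equals the ball integral
  have hRHS : (∫ w, f0 w) = ∫ z in ball c r, u z := by
    rw [hf0, MeasureTheory.integral_indicator measurableSet_ball]
    have hemb : MeasurableEmbedding (fun w : ℂ => c + w) :=
      (Homeomorph.addLeft c).measurableEmbedding
    have hmp : MeasurePreserving (fun w : ℂ => c + w) volume volume :=
      measurePreserving_add_left volume c
    have himg : (fun w : ℂ => c + w) '' ball 0 r = ball c r := by
      ext z
      constructor
      · rintro ⟨w, hw, rfl⟩
        simpa [mem_ball, dist_eq_norm, add_sub_cancel_left] using mem_ball_zero_iff.mp hw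
      · intro hz
        exact ⟨z - c, by simpa [mem_ball_zero_iff, dist_eq_norm] using hz, by ring⟩
    rw [← himg, hmp.setIntegral_image_emb hemb]
  -- LHS of polar formula equals integral over s
  have hLHS : (∫ p in polarCoord.target, p.1 • f0 (Complex.polarCoord.symm p))
      = ∫ p in s, p.1 * u (ψ p) := by
    have hsub_t : s ⊆ polarCoord.target := by
      rintro ⟨ρ, θ⟩ ⟨⟨h1, h2⟩, h3⟩
      exact ⟨h1, h3⟩
    have h1 : (∫ p in polarCoord.target, p.1 • f0 (Complex.polarCoord.symm p))
        = ∫ p in polarCoord.target, s.indicator (fun p => p.1 * u (ψ p)) p := by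
      refine setIntegral_congr_fun polarCoord.open_target.measurableSet fun p hp => ?_
      have hp1 : 0 < p.1 := hp.1
      have hp2 : p.2 ∈ Ioo (-π) π := hp.2
      have habs : ‖Complex.polarCoord.symm p‖ = p.1 := by
        rw [Complex.norm_polarCoord_symm, abs_of_pos hp1]
      by_cases h : p.1 < r
      · have hmem : Complex.polarCoord.symm p ∈ ball (0:ℂ) r := by
          rwa [mem_ball_zero_iff, habs]
        have hps : p ∈ s := ⟨⟨hp1, h⟩, hp2⟩
        rw [Set.indicator_of_mem hps, hf0, Set.indicator_of_mem hmem, smul_eq_mul, hψ_eq]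
      · have hmem : Complex.polarCoord.symm p ∉ ball (0:ℂ) r := by
          rw [mem_ball_zero_iff, habs]; exact h
        have hps : p ∉ s := fun hps => h hps.1.2
        rw [Set.indicator_of_notMem hps, hf0, Set.indicator_of_notMem hmem, smul_eq_mul,
          mul_zero]
    rw [h1, setIntegral_indicator (by measurability : MeasurableSet s),
      Set.inter_eq_self_of_subset_right hsub_t]
  -- integrability on s
  have hK : IsCompact (Icc (0:ℝ) r ×ˢ Icc (-π) π) := isCompact_Icc.prod isCompact_Icc
  have hsK : s ⊆ Icc (0:ℝ) r ×ˢ Icc (-π) π :=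
    Set.prod_mono Ioo_subset_Icc_self Ioo_subset_Icc_self
  have hcontK : ContinuousOn (fun p : ℝ × ℝ => p.1 * u (ψ p)) (Icc (0:ℝ) r ×ˢ Icc (-π) π) := by
    refine continuous_fst.continuousOn.mul ?_
    refine (huc.comp hψc.continuousOn ?_)
    intro p hp
    rw [mem_closedBall, hψ_dist]
    rw [abs_le]
    constructor
    · linarith [hp.1.1]
    · exact hp.1.2
  have hint_s : IntegrableOn (fun p : ℝ × ℝ => p.1 * u (ψ p)) s volume :=
    (hcontK.integrableOn_compact hK).mono_set hsK
  -- Fubini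
  have hprod : ((volume : Measure ℝ).restrict (Ioo 0 r)).prod
      ((volume : Measure ℝ).restrict (Ioo (-π) π)) = (volume : Measure (ℝ × ℝ)).restrict s := by
    rw [Measure.prod_restrict, hs, ← Measure.volume_eq_prod]
  have hfub : (∫ p in s, p.1 * u (ψ p))
      = ∫ ρ in Ioo (0:ℝ) r, ∫ θ in Ioo (-π) π, ρ * u (ψ (ρ, θ)) := by
    rw [hs]
    exact setIntegral_prod (fun p : ℝ × ℝ => p.1 * u (ψ p)) (by rwa [hs] at hint_s)
  set g1 : ℝ → ℝ := fun ρ => ∫ θ in Ioo (-π) π, ρ * u (ψ (ρ, θ)) with hg1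
  have hinner : ∀ ρ ∈ Ioo (0:ℝ) r, 2 * π * ‖F c‖ ^ 2 * ρ ≤ g1 ρ := by
    intro ρ hρ
    have hper : Function.Periodic (fun θ => u (circleMap c ρ θ)) (2 * π) :=
      fun θ => congrArg u (periodic_circleMap c ρ θ)
    have hIoo : (∫ θ in Ioo (-π) π, u (circleMap c ρ θ))
        = ∫ θ in (0:ℝ)..(2*π), u (circleMap c ρ θ) := by
      have h1 := hper.intervalIntegral_add_eq (-π) 0
      rw [zero_add] at h1
      have h2 : -π + 2 * π = π := by ring
      rw [h2] at h1
      rw [← h1, intervalIntegral.integral_of_le (by linarith [Real.pi_pos] : -π ≤ π),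
        MeasureTheory.integral_Ioc_eq_integral_Ioo]
    have hcs : ‖F c‖ ^ 2 * (2 * π) ≤ ∫ θ in (0:ℝ)..(2*π), ‖F (circleMap c ρ θ)‖ ^ 2 :=
      circle_submean F c ρ hρ.1 V hF
        ((closedBall_subset_closedBall hρ.2.le).trans hsub)
    have : g1 ρ = ρ * ∫ θ in Ioo (-π) π, u (circleMap c ρ θ) := by
      rw [hg1]
      simp only [hψ_circle]
      exact MeasureTheory.integral_const_mul ρ _
    rw [this, hIoo]
    calc 2 * π * ‖F c‖ ^ 2 * ρ = ρ * (‖F c‖ ^ 2 * (2 * π)) := by ring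
    _ ≤ ρ * ∫ θ in (0:ℝ)..(2*π), ‖F (circleMap c ρ θ)‖ ^ 2 := by
        apply mul_le_mul_of_nonneg_left hcs hρ.1.le
  have hg1_int : IntegrableOn g1 (Ioo 0 r) := by
    have h2 : Integrable (fun p : ℝ × ℝ => p.1 * u (ψ p))
        (((volume : Measure ℝ).restrict (Ioo 0 r)).prod
          ((volume : Measure ℝ).restrict (Ioo (-π) π))) := by
      rw [hprod]; rwa [hs] at hint_s
    exact h2.integral_prod_left
  have hlow_int : IntegrableOn (fun ρ : ℝ => 2 * π * ‖F c‖ ^ 2 * ρ) (Ioo 0 r) := by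
    refine ((Continuous.continuousOn (by fun_prop)).integrableOn_compact
        (isCompact_Icc (a := (0:ℝ)) (b := r))).mono_set Ioo_subset_Icc_self
  have houter : (∫ ρ in Ioo (0:ℝ) r, 2 * π * ‖F c‖ ^ 2 * ρ) ≤ ∫ ρ in Ioo (0:ℝ) r, g1 ρ :=
    setIntegral_mono_on hlow_int hg1_int measurableSet_Ioo hinner
  have hid : (∫ ρ in Ioo (0:ℝ) r, ρ) = r ^ 2 / 2 := by
    rw [← MeasureTheory.integral_Ioc_eq_integral_Ioo, ← intervalIntegral.integral_of_le hr.le,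
      integral_id]
    norm_num
  have hval : (∫ ρ in Ioo (0:ℝ) r, 2 * π * ‖F c‖ ^ 2 * ρ) = ‖F c‖ ^ 2 * (π * r ^ 2) := by
    rw [MeasureTheory.integral_const_mul, hid]
    ring
  have hreal : ‖F c‖ ^ 2 * (π * r ^ 2) ≤ ∫ z in ball c r, u z := by
    rw [← hRHS, ← hpolar, hLHS, hfub]
    rw [hval] at houter
    exact houter
  -- pass to lintegral
  have huint : IntegrableOn u (ball c r) :=
    (huc.integrableOn_compact (isCompact_closedBall c r)).mono_set ball_subset_closedBall
  have hnn : 0 ≤ᵐ[volume.restrict (ball c r)] u :=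
    Filter.Eventually.of_forall fun z => by positivity
  have hlint : (∫⁻ z in ball c r, ENNReal.ofReal (u z))
      = ENNReal.ofReal (∫ z in ball c r, u z) :=
    (MeasureTheory.ofReal_integral_eq_lintegral_ofReal huint hnn).symm
  have hπ : (NNReal.pi : ℝ≥0∞) = ENNReal.ofReal π := by
    rw [← NNReal.coe_real_pi, ENNReal.ofReal_coe_nnreal]
  calc ENNReal.ofReal (‖F c‖ ^ 2) * volume (ball c r)
      = ENNReal.ofReal (‖F c‖ ^ 2) * (ENNReal.ofReal (r ^ 2) * ENNReal.ofReal π) := by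
        rw [Complex.volume_ball, hπ, ← ENNReal.ofReal_pow hr.le]
    _ = ENNReal.ofReal (‖F c‖ ^ 2 * (π * r ^ 2)) := by
        rw [← ENNReal.ofReal_mul (by positivity), ← ENNReal.ofReal_mul (by positivity)]
        ring_nf
    _ ≤ ENNReal.ofReal (∫ z in ball c r, u z) := ENNReal.ofReal_le_ofReal hreal
    _ = ∫⁻ z in ball c r, ENNReal.ofReal (u z) := hlint.symm

theorem measurable_indicator_of_continuousOn {X : Type*} [TopologicalSpace X]
    [MeasurableSpace X] [BorelSpace X] {s : Set X} (hs : MeasurableSet s)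
    {g : X → ℝ≥0∞} (hg : ContinuousOn g s) : Measurable (s.indicator g) := by
  classical
  have h1 : Continuous (s.restrict g) := continuousOn_iff_continuous_restrict.mp hg
  have h2 : Measurable fun x : s => g ↑x := h1.measurable
  have heq : s.indicator g = fun x => if h : x ∈ s then g ((⟨x, h⟩ : s) : X) else 0 := by
    funext x; by_cases h : x ∈ s <;> simp [Set.indicator, h]
  rw [heq]
  exact Measurable.dite h2 measurable_const hs

theorem polydisc_submean (n : ℕ) (F : (Fin n → ℂ) → ℂ) (V : Set (Fin n → ℂ))
    (hF : DifferentiableOn ℂ F V) (a : Fin n → ℂ) (r : ℝ) (hr : 0 < r)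
    (hsub : {z : Fin n → ℂ | ∀ i, z i ∈ closedBall (a i) r} ⊆ V) :
    ENNReal.ofReal (‖F a‖ ^ 2) * volume (Set.univ.pi fun i => ball (a i) r)
      ≤ ∫⁻ z in Set.univ.pi fun i => ball (a i) r, ENNReal.ofReal (‖F z‖ ^ 2) := by
  classical
  set P : Set (Fin n → ℂ) := Set.univ.pi fun i => ball (a i) r with hP
  have hPopen : IsOpen P := isOpen_set_pi finite_univ (fun i _ => isOpen_ball)
  have hPsub : P ⊆ V := by
    intro z hz
    exact hsub fun i => ball_subset_closedBall (hz i (mem_univ i))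
  set H : (Fin n → ℂ) → ℝ≥0∞ :=
    P.indicator (fun z => ENNReal.ofReal (‖F z‖ ^ 2)) with hH
  have hHmeas : Measurable H := by
    refine measurable_indicator_of_continuousOn hPopen.measurableSet ?_
    exact ENNReal.continuous_ofReal.comp_continuousOn
      (((hF.continuousOn.mono hPsub).norm).pow 2)
  set v : ℝ≥0∞ := volume (ball (0:ℂ) r) with hv
  have hvlt : v ≠ ⊤ := (measure_ball_lt_top).ne
  have hvball : ∀ c : ℂ, volume (ball c r) = v := by
    intro c; rw [hv, Complex.volume_ball, Complex.volume_ball]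
  have key : ∀ s : Finset (Fin n), ∀ x : Fin n → ℂ,
      (∏ i ∈ sᶜ, (ball (a i) r).indicator (fun _ => (1:ℝ≥0∞)) (x i))
        * ENNReal.ofReal (‖F (s.piecewise a x)‖ ^ 2) * v ^ s.card
      ≤ (∫⋯∫⁻_s, H ∂(fun _ => (volume : Measure ℂ))) x := by
    intro s
    induction s using Finset.induction_on with
    | empty =>
      intro x
      rw [lmarginal_empty]
      rw [Finset.piecewise_empty, Finset.card_empty, pow_zero, mul_one, Finset.compl_empty]
      by_cases hx : x ∈ P
      · have h1 : (∏ i ∈ Finset.univ, (ball (a i) r).indicator (fun _ => (1:ℝ≥0∞)) (x i)) = 1 := by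
          refine Finset.prod_eq_one fun i _ => ?_
          exact Set.indicator_of_mem (hx i (mem_univ i)) _
        rw [h1, one_mul, hH, Set.indicator_of_mem hx]
      · rw [hP, mem_univ_pi] at hx
        push_neg at hx
        obtain ⟨i, hi⟩ := hx
        have h0 : (∏ i ∈ Finset.univ, (ball (a i) r).indicator (fun _ => (1:ℝ≥0∞)) (x i)) = 0 :=
          Finset.prod_eq_zero (Finset.mem_univ i) (Set.indicator_of_notMem hi _)
        rw [h0, zero_mul]
        exact zero_le
    | @insert j s hj ih =>
      intro x
      rw [lmarginal_insert _ hHmeas hj]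
      by_cases hxout : ∀ i, i ∉ insert j s → x i ∈ ball (a i) r
      case neg =>
        push_neg at hxout
        obtain ⟨i, hins, hi⟩ := hxout
        have h0 : (∏ i ∈ (insert j s)ᶜ, (ball (a i) r).indicator (fun _ => (1:ℝ≥0∞)) (x i)) = 0 :=
          Finset.prod_eq_zero (Finset.mem_compl.mpr hins) (Set.indicator_of_notMem hi _)
        rw [h0, zero_mul, zero_mul]
        exact zero_le
      case pos =>
      set w : Fin n → ℂ := s.piecewise a x with hw
      have hupdate : ∀ y : ℂ, s.piecewise a (Function.update x j y) = Function.update w j y := by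
        intro y; funext i
        rcases eq_or_ne i j with rfl | hij
        · rw [Finset.piecewise_eq_of_notMem _ _ _ hj, Function.update_self,
            Function.update_self]
        · rw [Function.update_of_ne hij]
          by_cases his : i ∈ s
          · rw [Finset.piecewise_eq_of_mem _ _ _ his, hw, Finset.piecewise_eq_of_mem _ _ _ his]
          · rw [Finset.piecewise_eq_of_notMem _ _ _ his, Function.update_of_ne hij, hw,
              Finset.piecewise_eq_of_notMem _ _ _ his]
      -- the slice function is holomorphic near the closed disc
      have hupd_diff : Differentiable ℂ (fun y : ℂ => Function.update w j y) := by
        rw [differentiable_pi]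
        intro i
        have : (fun y : ℂ => Function.update w j y i) = fun y => if i = j then y else w i := by
          funext y; rw [Function.update_apply]
        rw [this]
        by_cases hij : i = j
        · simpa [hij] using differentiable_id
        · simpa [hij] using differentiable_const (w i)
      have hslice_diff : DifferentiableOn ℂ (fun y : ℂ => F (Function.update w j y))
          ((fun y : ℂ => Function.update w j y) ⁻¹' V) :=
        hF.comp hupd_diff.differentiableOn (fun y hy => hy)
      have hslice_sub : closedBall (a j) r ⊆ (fun y : ℂ => Function.update w j y) ⁻¹' V := by
        intro y hy
        refine hsub fun i => ?_
        show Function.update w j y i ∈ closedBall (a i) r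
        rcases eq_or_ne i j with rfl | hij
        · rwa [Function.update_self]
        · rw [Function.update_of_ne hij, hw]
          by_cases his : i ∈ s
          · rw [Finset.piecewise_eq_of_mem _ _ _ his]
            exact mem_closedBall_self hr.le
          · rw [Finset.piecewise_eq_of_notMem _ _ _ his]
            refine ball_subset_closedBall (hxout i ?_)
            simp [Finset.mem_insert, hij, his]
      have hdisc := disc_submean (fun y : ℂ => F (Function.update w j y)) (a j) r hr _
        hslice_diff hslice_sub
      have hFaj : Function.update w j (a j) = (insert j s).piecewise a x := by
        funext i
        rcases eq_or_ne i j with rfl | hij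
        · rw [Function.update_self, Finset.piecewise_eq_of_mem _ _ _ (Finset.mem_insert_self _ s)]
        · rw [Function.update_of_ne hij, hw]
          by_cases his : i ∈ s
          · rw [Finset.piecewise_eq_of_mem _ _ _ his,
              Finset.piecewise_eq_of_mem _ _ _ (Finset.mem_insert_of_mem his)]
          · rw [Finset.piecewise_eq_of_notMem _ _ _ his,
              Finset.piecewise_eq_of_notMem _ _ _ (by simp [Finset.mem_insert, hij, his])]
      have step1 : ∫⁻ y, ((∏ i ∈ sᶜ, (ball (a i) r).indicator (fun _ => (1:ℝ≥0∞))
            ((Function.update x j y) i))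
          * ENNReal.ofReal (‖F (s.piecewise a (Function.update x j y))‖ ^ 2) * v ^ s.card)
          ≤ ∫⁻ y, (∫⋯∫⁻_s, H ∂(fun _ => (volume : Measure ℂ))) (Function.update x j y) :=
        lintegral_mono fun y => ih (Function.update x j y)
      set C : ℝ≥0∞ := (∏ i ∈ (insert j s)ᶜ, (ball (a i) r).indicator (fun _ => (1:ℝ≥0∞)) (x i))
        * v ^ s.card with hC
      have hCne : C ≠ ⊤ := by
        refine ENNReal.mul_ne_top ?_ (ENNReal.pow_ne_top hvlt)
        have hle : (∏ i ∈ (insert j s)ᶜ, (ball (a i) r).indicator (fun _ => (1:ℝ≥0∞)) (x i))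
            ≤ ∏ _i ∈ (insert j s)ᶜ, (1:ℝ≥0∞) := by
          refine Finset.prod_le_prod' fun i _ => ?_
          exact Set.indicator_apply_le' (fun _ => le_rfl) (fun _ => zero_le_one)
        rw [Finset.prod_const_one] at hle
        exact (lt_of_le_of_lt hle ENNReal.one_lt_top).ne
      have hLHSpt : ∀ y : ℂ, (∏ i ∈ sᶜ, (ball (a i) r).indicator (fun _ => (1:ℝ≥0∞))
            ((Function.update x j y) i))
          * ENNReal.ofReal (‖F (s.piecewise a (Function.update x j y))‖ ^ 2) * v ^ s.card
          = C * ((ball (a j) r).indicator (fun _ => (1:ℝ≥0∞)) y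
              * ENNReal.ofReal (‖F (Function.update w j y)‖ ^ 2)) := by
        intro y
        have hjc : j ∈ sᶜ := Finset.mem_compl.mpr hj
        rw [← Finset.mul_prod_erase sᶜ _ hjc, Function.update_self, ← Finset.compl_insert]
        have hrest : (∏ i ∈ (insert j s)ᶜ, (ball (a i) r).indicator (fun _ => (1:ℝ≥0∞))
              ((Function.update x j y) i))
            = ∏ i ∈ (insert j s)ᶜ, (ball (a i) r).indicator (fun _ => (1:ℝ≥0∞)) (x i) := by
          refine Finset.prod_congr rfl fun i hi => ?_
          rw [Finset.compl_insert] at hi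
          rw [Function.update_of_ne (Finset.ne_of_mem_erase hi)]
        rw [hrest, hupdate y, hC]
        ring
      have hindmul : (fun y : ℂ => (ball (a j) r).indicator (fun _ => (1:ℝ≥0∞)) y
            * ENNReal.ofReal (‖F (Function.update w j y)‖ ^ 2))
          = fun y : ℂ => (ball (a j) r).indicator
              (fun y => ENNReal.ofReal (‖F (Function.update w j y)‖ ^ 2)) y := by
        funext y
        by_cases h : y ∈ ball (a j) r <;> simp [h]
      calc (∏ i ∈ (insert j s)ᶜ, (ball (a i) r).indicator (fun _ => (1:ℝ≥0∞)) (x i))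
            * ENNReal.ofReal (‖F ((insert j s).piecewise a x)‖ ^ 2) * v ^ (insert j s).card
          = C * (ENNReal.ofReal (‖F (Function.update w j (a j))‖ ^ 2)
              * volume (ball (a j) r)) := by
            rw [hFaj, hC, Finset.card_insert_of_notMem hj, pow_succ, hvball (a j)]
            ring
        _ ≤ C * ∫⁻ y in ball (a j) r, ENNReal.ofReal (‖F (Function.update w j y)‖ ^ 2) :=
            mul_le_mul_right hdisc C
        _ = ∫⁻ y, C * ((ball (a j) r).indicator (fun _ => (1:ℝ≥0∞)) y
              * ENNReal.ofReal (‖F (Function.update w j y)‖ ^ 2)) := by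
            rw [lintegral_const_mul' _ _ hCne]
            congr 1
            rw [hindmul, lintegral_indicator measurableSet_ball _]
        _ = ∫⁻ y, ((∏ i ∈ sᶜ, (ball (a i) r).indicator (fun _ => (1:ℝ≥0∞))
              ((Function.update x j y) i))
            * ENNReal.ofReal (‖F (s.piecewise a (Function.update x j y))‖ ^ 2) * v ^ s.card) := by
            refine lintegral_congr fun y => (hLHSpt y).symm
        _ ≤ _ := step1
  -- conclude from `key` applied to `univ` at the point `a`
  have hfinal := key Finset.univ a
  rw [Finset.compl_univ, Finset.prod_empty, one_mul] at hfinal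
  have hpw : Finset.univ.piecewise a a = a := by
    funext i; by_cases h : i ∈ Finset.univ <;> simp [Finset.piecewise]
  rw [hpw] at hfinal
  rw [lmarginal_univ] at hfinal
  have hvol : volume P = v ^ Finset.univ.card (α := Fin n) := by
    rw [hP, volume_pi_pi]
    simp_rw [hvball]
    exact Finset.prod_const v
  have hlint : (∫⁻ x, H x ∂Measure.pi fun _ => (volume : Measure ℂ))
      = ∫⁻ z in P, ENNReal.ofReal (‖F z‖ ^ 2) := by
    rw [← MeasureTheory.volume_pi, hH, lintegral_indicator hPopen.measurableSet _]
  rw [hlint] at hfinal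
  rw [hvol]
  exact hfinal

theorem measurableSet_inter_preimage {X Y : Type*} [TopologicalSpace X]
    [MeasurableSpace X] [BorelSpace X] [TopologicalSpace Y] [MeasurableSpace Y]
    [BorelSpace Y] {s : Set X} (hs : MeasurableSet s) {g : X → Y}
    (hg : ContinuousOn g s) {t : Set Y} (ht : MeasurableSet t) :
    MeasurableSet (s ∩ g ⁻¹' t) := by
  have h1 : Measurable (s.restrict g) :=
    (continuousOn_iff_continuous_restrict.mp hg).measurable
  have h3 : MeasurableSet (Subtype.val '' (s.restrict g ⁻¹' t)) :=
    (MeasurableEmbedding.subtype_coe hs).measurableSet_image.mpr (h1 ht)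
  convert h3 using 1
  ext x
  constructor
  · rintro ⟨hxs, hxt⟩
    exact ⟨⟨x, hxs⟩, hxt, rfl⟩
  · rintro ⟨⟨y, hys⟩, hyt, rfl⟩
    exact ⟨hys, hyt⟩

/-- **Convergence criterion for Poincaré series.** Let `M ⊆ ℂⁿ` be open and
let `Γ` (here: a group `G` acting faithfully on `M` via `act`) be a group of
measure-preserving biholomorphic maps of `M`.  Let `a ∈ M` have finite
stabilizer `Γ_a`, and suppose there is an open neighborhood `U ⊆ M` of `a`
such that `A(U) ∩ U ≠ ∅ → A ∈ Γ_a` and `A ∈ Γ_a → A(U) = U`.  Then for every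
holomorphic `f : M → ℂ` with `∫_M |f|² < ∞`, the family `(|f(A a)|²)_{A ∈ Γ}`
is (unconditionally) summable. -/
theorem poincare_series_summable
    (n : ℕ) (M : Set (Fin n → ℂ)) (hM : IsOpen M)
    (G : Type) [Group G] (act : G → (Fin n → ℂ) → (Fin n → ℂ))
    -- `act` realizes `G` as a group of maps of `M`:
    (h_one : ∀ x ∈ M, act 1 x = x)
    (h_mul : ∀ g h : G, ∀ x ∈ M, act (g * h) x = act g (act h x))
    (h_faithful : ∀ g h : G, (∀ x ∈ M, act g x = act h x) → g = h)
    -- each element is a biholomorphic map of `M` preserving Lebesgue measure: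
    (h_bij : ∀ g : G, Set.BijOn (act g) M M)
    (h_holo : ∀ g : G, DifferentiableOn ℂ (act g) M)
    (h_meas : ∀ g : G, ∀ s : Set (Fin n → ℂ), s ⊆ M → MeasurableSet s →
      volume (act g '' s) = volume s)
    -- a point with finite stabilizer and a suitable neighborhood:
    (a : Fin n → ℂ) (ha : a ∈ M)
    (h_stab : {g : G | act g a = a}.Finite)
    (U : Set (Fin n → ℂ)) (hU : IsOpen U) (haU : a ∈ U) (hUM : U ⊆ M)
    (hU1 : ∀ g : G, (act g '' U ∩ U).Nonempty → act g a = a)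
    (hU2 : ∀ g : G, act g a = a → act g '' U = U)
    -- a square-integrable holomorphic function on `M`:
    (f : (Fin n → ℂ) → ℂ) (hf : DifferentiableOn ℂ f M)
    (hf2 : (∫⁻ z in M, ENNReal.ofReal (‖f z‖ ^ 2) ∂volume) < ⊤) :
    Summable (fun g : G => ‖f (act g a)‖ ^ 2) := by
  classical
  -- choose a radius
  obtain ⟨ε, hε, hball⟩ := Metric.isOpen_iff.mp hU a haU
  set r : ℝ := ε / 2 with hrdef
  have hr : 0 < r := by positivity
  have hcb : Metric.closedBall a r ⊆ U :=
    subset_trans (closedBall_subset_ball (by rw [hrdef]; linarith)) hball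
  have hCP : {z : Fin n → ℂ | ∀ i, z i ∈ closedBall (a i) r} ⊆ U := by
    intro z hz
    refine hcb ?_
    rw [mem_closedBall, dist_pi_le_iff hr.le]
    exact fun i => hz i
  set P : Set (Fin n → ℂ) := Set.univ.pi fun i => ball (a i) r with hPdef
  have hPopen : IsOpen P := isOpen_set_pi finite_univ (fun i _ => isOpen_ball)
  have hPmeas : MeasurableSet P := hPopen.measurableSet
  have hPU : P ⊆ U := by
    intro z hz
    exact hCP fun i => ball_subset_closedBall (hz i (mem_univ i))
  have hPM : P ⊆ M := hPU.trans hUM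
  have haP : a ∈ P := fun i _ => mem_ball_self hr
  set v : ℝ≥0∞ := volume P with hvdef
  have hv0 : v ≠ 0 := by
    rw [hvdef, hPdef, volume_pi_pi]
    rw [Finset.prod_ne_zero_iff]
    exact fun i _ => (measure_ball_pos volume (a i) hr).ne'
  have hvfin : v ≠ ⊤ := by
    rw [hvdef, hPdef, volume_pi_pi]
    exact (ENNReal.prod_lt_top fun i _ => measure_ball_lt_top).ne
  -- group action facts
  have hact_mem : ∀ (g : G), ∀ x ∈ M, act g x ∈ M := fun g x hx => (h_bij g).mapsTo hx
  have hinv₁ : ∀ (g : G), ∀ x ∈ M, act g⁻¹ (act g x) = x := by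
    intro g x hx
    rw [← h_mul g⁻¹ g x hx, inv_mul_cancel, h_one x hx]
  have hinv₂ : ∀ (g : G), ∀ x ∈ M, act g (act g⁻¹ x) = x := by
    intro g x hx
    rw [← h_mul g g⁻¹ x hx, mul_inv_cancel, h_one x hx]
  -- images of P
  have himg_eq : ∀ g : G, act g '' P = M ∩ (act g⁻¹) ⁻¹' P := by
    intro g
    ext x
    constructor
    · rintro ⟨p, hp, rfl⟩
      have hpM : p ∈ M := hPM hp
      refine ⟨hact_mem g p hpM, ?_⟩
      show act g⁻¹ (act g p) ∈ P
      rwa [hinv₁ g p hpM]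
    · rintro ⟨hxM, hxP⟩
      exact ⟨act g⁻¹ x, hxP, hinv₂ g x hxM⟩
  have himg_open : ∀ g : G, IsOpen (act g '' P) := by
    intro g
    rw [himg_eq g]
    exact (h_holo g⁻¹).continuousOn.isOpen_inter_preimage hM hPopen
  have himg_subM : ∀ g : G, act g '' P ⊆ M := fun g =>
    (Set.image_mono hPM).trans (h_bij g).mapsTo.image_subset
  -- pushforward of the restricted measure
  have haem : ∀ g : G, AEMeasurable (act g) (volume.restrict P) := fun g =>
    ContinuousOn.aemeasurable ((h_holo g).continuousOn.mono hPM) hPmeas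
  have hmap : ∀ g : G, Measure.map (act g) (volume.restrict P)
      = volume.restrict (act g '' P) := by
    intro g
    refine Measure.ext fun t ht => ?_
    rw [Measure.map_apply_of_aemeasurable (haem g) ht, Measure.restrict_apply' hPmeas,
      Measure.restrict_apply' (himg_open g).measurableSet]
    have hmeas' : MeasurableSet (P ∩ (act g) ⁻¹' t) :=
      measurableSet_inter_preimage hPmeas ((h_holo g).continuousOn.mono hPM) ht
    have h1 : act g '' (P ∩ (act g) ⁻¹' t) = act g '' P ∩ t := Set.image_inter_preimage _ _ _
    rw [inter_comm ((act g) ⁻¹' t) P, ← h_meas g _ (inter_subset_left.trans hPM) hmeas', h1,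
      inter_comm]
  -- change of variables
  have hcov : ∀ g : G, (∫⁻ z in P, ENNReal.ofReal (‖f (act g z)‖ ^ 2))
      = ∫⁻ w in act g '' P, ENNReal.ofReal (‖f w‖ ^ 2) := by
    intro g
    have hφ : AEMeasurable (fun w => ENNReal.ofReal (‖f w‖ ^ 2))
        (Measure.map (act g) (volume.restrict P)) := by
      rw [hmap g]
      exact ContinuousOn.aemeasurable
        ((ENNReal.continuous_ofReal.comp_continuousOn
          (((hf.continuousOn.mono (himg_subM g)).norm).pow 2)))
        (himg_open g).measurableSet
    calc (∫⁻ z in P, ENNReal.ofReal (‖f (act g z)‖ ^ 2))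
        = ∫⁻ w, ENNReal.ofReal (‖f w‖ ^ 2) ∂(Measure.map (act g) (volume.restrict P)) :=
          (lintegral_map' hφ (haem g)).symm
      _ = ∫⁻ w in act g '' P, ENNReal.ofReal (‖f w‖ ^ 2) := by rw [hmap g]
  -- sub-mean value estimate for each g
  have hptf : ∀ g : G, ENNReal.ofReal (‖f (act g a)‖ ^ 2) * v
      ≤ ∫⁻ w in act g '' P, ENNReal.ofReal (‖f w‖ ^ 2) := by
    intro g
    have hdiff : DifferentiableOn ℂ (fun z => f (act g z)) M :=
      hf.comp (h_holo g) (h_bij g).mapsTo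
    have h := polydisc_submean n (fun z => f (act g z)) M hdiff a r hr (hCP.trans hUM)
    rw [← hPdef, ← hvdef] at h
    exact le_trans h (le_of_eq (hcov g))
  -- bounded overlap of the images of P
  set N : ℕ := h_stab.toFinset.card with hNdef
  have hover : ∀ (t : Finset G) (z : Fin n → ℂ),
      (t.filter (fun g => z ∈ act g '' P)).card ≤ N := by
    intro t z
    by_cases hne : (t.filter (fun g => z ∈ act g '' P)).Nonempty
    · obtain ⟨g₀, hg₀⟩ := hne
      have hg₀P : z ∈ act g₀ '' P := (Finset.mem_filter.mp hg₀).2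
      refine Finset.card_le_card_of_injOn (fun g => g₀⁻¹ * g) ?_ ?_
      · intro g hg
        rw [Finset.mem_coe, Set.Finite.mem_toFinset]
        obtain ⟨p, hp, hpz⟩ := (Finset.mem_filter.mp hg).2
        obtain ⟨q, hq, hqz⟩ := hg₀P
        have hpM : p ∈ M := hPM hp
        have hqM : q ∈ M := hPM hq
        have hkey : act (g₀⁻¹ * g) p = q := by
          rw [h_mul g₀⁻¹ g p hpM, hpz, ← hqz, hinv₁ g₀ q hqM]
        refine hU1 _ ⟨act (g₀⁻¹ * g) p, ⟨p, hPU hp, rfl⟩, ?_⟩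
        rw [hkey]
        exact hPU hq
      · intro g₁ _ g₂ _ h
        exact mul_left_cancel h
    · rw [Finset.not_nonempty_iff_eq_empty] at hne
      rw [hne, Finset.card_empty]
      exact Nat.zero_le _
  -- a globally measurable version of the integrand
  set Ftil : (Fin n → ℂ) → ℝ≥0∞ := M.indicator (fun z => ENNReal.ofReal (‖f z‖ ^ 2)) with hFtil
  have hFtil_meas : Measurable Ftil :=
    measurable_indicator_of_continuousOn hM.measurableSet
      (ENNReal.continuous_ofReal.comp_continuousOn ((hf.continuousOn.norm).pow 2))
  set T : ℝ≥0∞ := ∫⁻ z in M, ENNReal.ofReal (‖f z‖ ^ 2) with hTdef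
  have hFsum : ∀ t : Finset G,
      (∑ g ∈ t, ∫⁻ w in act g '' P, ENNReal.ofReal (‖f w‖ ^ 2)) ≤ (N : ℝ≥0∞) * T := by
    intro t
    have h1 : ∀ g : G, (∫⁻ w in act g '' P, ENNReal.ofReal (‖f w‖ ^ 2))
        = ∫⁻ w, (act g '' P).indicator Ftil w := by
      intro g
      rw [lintegral_indicator (himg_open g).measurableSet]
      refine setLIntegral_congr_fun (himg_open g).measurableSet ?_
      exact fun w hw => by
        rw [hFtil, Set.indicator_of_mem (himg_subM g hw)]
    calc (∑ g ∈ t, ∫⁻ w in act g '' P, ENNReal.ofReal (‖f w‖ ^ 2))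
        = ∑ g ∈ t, ∫⁻ w, (act g '' P).indicator Ftil w := by
          exact Finset.sum_congr rfl fun g _ => h1 g
      _ = ∫⁻ w, ∑ g ∈ t, (act g '' P).indicator Ftil w :=
          (lintegral_finset_sum _ fun g _ =>
            hFtil_meas.indicator (himg_open g).measurableSet).symm
      _ ≤ ∫⁻ w, (N : ℝ≥0∞) * Ftil w := by
          refine lintegral_mono fun w => ?_
          have h2 : (∑ g ∈ t, (act g '' P).indicator Ftil w)
              = (t.filter (fun g => w ∈ act g '' P)).card • Ftil w := by
            rw [← Finset.sum_const]
            rw [Finset.sum_filter]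
            refine Finset.sum_congr rfl fun g _ => ?_
            by_cases h : w ∈ act g '' P <;> simp [h]
          rw [h2, nsmul_eq_mul]
          exact mul_le_mul_left (Nat.cast_le.mpr (hover t w)) _
      _ = (N : ℝ≥0∞) * ∫⁻ w, Ftil w :=
          lintegral_const_mul' _ _ (ENNReal.natCast_ne_top N)
      _ = (N : ℝ≥0∞) * T := by
          rw [hFtil, lintegral_indicator hM.measurableSet, hTdef]
  -- uniform bound on partial sums
  have hbound : ∀ t : Finset G,
      (∑ g ∈ t, ENNReal.ofReal (‖f (act g a)‖ ^ 2)) ≤ (N : ℝ≥0∞) * T / v := by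
    intro t
    rw [ENNReal.le_div_iff_mul_le (Or.inl hv0) (Or.inl hvfin)]
    calc (∑ g ∈ t, ENNReal.ofReal (‖f (act g a)‖ ^ 2)) * v
        = ∑ g ∈ t, ENNReal.ofReal (‖f (act g a)‖ ^ 2) * v := Finset.sum_mul _ _ _
      _ ≤ ∑ g ∈ t, ∫⁻ w in act g '' P, ENNReal.ofReal (‖f w‖ ^ 2) :=
          Finset.sum_le_sum fun g _ => hptf g
      _ ≤ (N : ℝ≥0∞) * T := hFsum t
  have hCfin : (N : ℝ≥0∞) * T / v ≠ ⊤ := by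
    exact (ENNReal.div_lt_top
      (ENNReal.mul_ne_top (ENNReal.natCast_ne_top N) hf2.ne) hv0).ne
  refine summable_of_sum_le (c := ((N : ℝ≥0∞) * T / v).toReal) (fun g => by positivity) ?_
  intro t
  have heq : (∑ g ∈ t, ‖f (act g a)‖ ^ 2)
      = (∑ g ∈ t, ENNReal.ofReal (‖f (act g a)‖ ^ 2)).toReal := by
    rw [ENNReal.toReal_sum (fun g _ => ENNReal.ofReal_ne_top)]
    refine Finset.sum_congr rfl fun g _ => ?_
    rw [ENNReal.toReal_ofReal (by positivity)]
  rw [heq]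
  exact ENNReal.toReal_mono hCfin (hbound t)
end
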